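/- Let (X, f) be a dynamical system with f topologically transitive. Let {F_n} (n = 1, 2, ...) be a sequence of closed invariant subsets of X, each a proper subset of X, whose union ∪_{n≥1} F_n is dense in X. Then for every positive integer k, the set (∪_{n≥1} F_n) \ (F_1 ∪ ... ∪ F_k) is dense in X. -/

import Mathlib

open Function Set

def TopTransitive {X : Type*} [TopologicalSpace X] (f : X → X) : Prop :=
  ∀ V W : Set X, IsOpen V → IsOpen W → V.Nonempty → W.Nonempty →
    ∃ n : ℕ, 0 < n ∧ (f^[n] '' V ∩ W).Nonempty

/-- The set `P` of periodic points of `f`. -/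
def PerPts {X : Type*} (f : X → X) : Set X :=
  {x | ∃ n : ℕ, 0 < n ∧ f^[n] x = x}

/-- The set `P_n` of periodic points of period at most `n`. -/
def PerPtsLe {X : Type*} (f : X → X) (n : ℕ) : Set X :=
  {x | ∃ m : ℕ, 0 < m ∧ m ≤ n ∧ f^[m] x = x}

lemma interior_union_empty {X : Type*} [TopologicalSpace X] {A B : Set X}
    (hA : IsClosed A) (hAi : interior A = ∅) (hBi : interior B = ∅) :
    interior (A ∪ B) = ∅ := by
  have h1 : interior (A ∪ B) \ A ⊆ interior B := by
    apply interior_maximal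
    · intro x hx
      rcases interior_subset hx.1 with h | h
      · exact absurd h hx.2
      · exact h
    · exact IsOpen.sdiff isOpen_interior hA
  have h2 : interior (A ∪ B) ⊆ A := by
    intro x hx
    by_contra h
    have := h1 ⟨hx, h⟩
    rw [hBi] at this
    exact this
  have h3 : interior (A ∪ B) ⊆ interior A :=
    interior_maximal h2 isOpen_interior
  rw [hAi] at h3
  exact eq_empty_of_subset_empty h3

lemma finset_biUnion_closed_int_empty {X : Type*} [TopologicalSpace X]
    {ι : Type*} [DecidableEq ι] (s : Finset ι) (A : ι → Set X)
    (h : ∀ n ∈ s, IsClosed (A n) ∧ interior (A n) = ∅) :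
    IsClosed (⋃ n ∈ s, A n) ∧ interior (⋃ n ∈ s, A n) = ∅ := by
  induction s using Finset.induction with
  | empty => simp
  | @insert a s ha ih =>
    have h1 := h a (Finset.mem_insert_self a s)
    have h2 := ih (fun n hn => h n (Finset.mem_insert_of_mem hn))
    rw [Finset.set_biUnion_insert]
    exact ⟨h1.1.union h2.1, interior_union_empty h1.1 h1.2 h2.2⟩

theorem dense_diff_of_closed_invariant_union
    {X : Type*} [TopologicalSpace X] [T2Space X]
    (f : X → X) (hf : Continuous f)
    (htrans : TopTransitive f)
    (F : ℕ → Set X)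
    (hclosed : ∀ n : ℕ, 1 ≤ n → IsClosed (F n))
    (hinv : ∀ n : ℕ, 1 ≤ n → f '' F n ⊆ F n)
    (hproper : ∀ n : ℕ, 1 ≤ n → F n ≠ Set.univ)
    (hdense : Dense (⋃ n ≥ 1, F n)) :
    ∀ k : ℕ, 1 ≤ k → Dense ((⋃ n ≥ 1, F n) \ (⋃ n ∈ Finset.Icc 1 k, F n)) := by
  have hiter : ∀ n : ℕ, 1 ≤ n → ∀ m : ℕ, f^[m] '' F n ⊆ F n := by
    intro n hn m
    induction m with
    | zero => simp
    | succ m ih =>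
      rw [Function.iterate_succ', Set.image_comp]
      exact (Set.image_mono (f := f) ih).trans (hinv n hn)
  have hint : ∀ n : ℕ, 1 ≤ n → interior (F n) = ∅ := by
    intro n hn
    by_contra h
    have hV : (interior (F n)).Nonempty := Set.nonempty_iff_ne_empty.2 h
    have hW : ((F n)ᶜ).Nonempty := by
      rw [Set.nonempty_compl]; exact hproper n hn
    obtain ⟨m, hm, x, hx1, hx2⟩ := htrans (interior (F n)) (F n)ᶜ isOpen_interior
      (hclosed n hn).isOpen_compl hV hW
    exact hx2 (hiter n hn m (Set.image_mono interior_subset hx1))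
  intro k hk
  set G : Set X := ⋃ n ∈ Finset.Icc 1 k, F n with hGdef
  obtain ⟨hGc, hGi⟩ := finset_biUnion_closed_int_empty (Finset.Icc 1 k) F
    (fun n hn => ⟨hclosed n (Finset.mem_Icc.1 hn).1, hint n (Finset.mem_Icc.1 hn).1⟩)
  rw [dense_iff_inter_open]
  intro U hU hUne
  have hUG : (U \ G).Nonempty := by
    by_contra h
    have : U ⊆ G := by
      intro x hx
      by_contra hxG
      exact h ⟨x, hx, hxG⟩
    have : U ⊆ interior G := interior_maximal this hU
    rw [hGi] at this
    exact absurd (this hUne.some_mem) (Set.notMem_empty _)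
  obtain ⟨x, hxU, hxS⟩ := dense_iff_inter_open.1 hdense (U \ G) (hU.sdiff hGc) hUG
  exact ⟨x, hxU.1, hxS, hxU.2⟩
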